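/- In the distance-fraud model, the success probabilities Pr(D_i) satisfy, for all 1 ≤ i ≤ n: Pr(D_i) = (1/4)·Pr(D_{i−1}) + (1/2)^i + (1/8)·Σ_{j=1}^{i−1} Pr(D_{j−1})·(1/2)^{i−j}, with Pr(D_0) = 1. In particular Pr(D_1) = 3/4 and Pr(D_2) = 1/2. -/

import Mathlib

/-!  The distance-fraud model of the paper.  Bits are elements of `ZMod 2`
(XOR is `+`, AND is `*`).  A sample point consists of the uniformly
distributed, mutually independent `n`-bit strings `Q, R⁰, R¹, c, c̃`
(key register, answer registers, verifier's challenges, malicious prover's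
random challenge guesses). -/

/-- Sample space: `(Q, R⁰, R¹, c, c̃)`. -/
abbrev DistΩ (n : ℕ) :=
  (Fin n → ZMod 2) × (Fin n → ZMod 2) × (Fin n → ZMod 2) ×
  (Fin n → ZMod 2) × (Fin n → ZMod 2)

namespace Dist

variable {n : ℕ}

def keyQ (ω : DistΩ n) : Fin n → ZMod 2 := ω.1
def reg0 (ω : DistΩ n) : Fin n → ZMod 2 := ω.2.1
def reg1 (ω : DistΩ n) : Fin n → ZMod 2 := ω.2.2.1
/-- `c`, the verifier's challenges. -/
def cVer (ω : DistΩ n) : Fin n → ZMod 2 := ω.2.2.2.1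
/-- `c̃`, the malicious prover's random challenge guesses. -/
def cGuess (ω : DistΩ n) : Fin n → ZMod 2 := ω.2.2.2.2

/-- `f_Q` applied to the length-`i` prefix of the challenge string `c`. -/
def fQ (Q c : Fin n → ZMod 2) (i : ℕ) : ZMod 2 :=
  ∑ j : Fin n, if (j : ℕ) < i then c j * Q j else 0

/-- `R_j^{b}`: the register bit selected by the bit `b` at round `j+1`. -/
def reg (ω : DistΩ n) (b : ZMod 2) (j : Fin n) : ZMod 2 :=
  if b = 0 then reg0 ω j else reg1 ω j

/-- The malicious prover's early reply at round `j+1`: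
`a = R_j^{c̃_j} ⊕ f_Q(C̃_j)`. -/
def ans (ω : DistΩ n) (j : Fin n) : ZMod 2 :=
  reg ω (cGuess ω j) j + fQ (keyQ ω) (cGuess ω) ((j : ℕ) + 1)

/-- The correct answer expected by the verifier at round `j+1`. -/
def corr (ω : DistΩ n) (j : Fin n) : ZMod 2 :=
  reg ω (cVer ω j) j + fQ (keyQ ω) (cVer ω) ((j : ℕ) + 1)

/-- `D_i`: the malicious prover wins the first `i` rounds (`D_0` is the sure
event). -/
def D (i : ℕ) (ω : DistΩ n) : Prop :=
  ∀ j : Fin n, (j : ℕ) < i → ans ω j = corr ω j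

/-- `F_i`: the running guess of `f_Q(C_i)` is correct (`F_0` is the sure
event). -/
def F (i : ℕ) (ω : DistΩ n) : Prop :=
  fQ (keyQ ω) (cGuess ω) i = fQ (keyQ ω) (cVer ω) i

open Classical in
/-- Probability of an event under the uniform distribution on `DistΩ n`. -/
noncomputable def pr (n : ℕ) (E : DistΩ n → Prop) : ℚ :=
  ((Finset.univ.filter E).card : ℚ) / ((Finset.univ : Finset (DistΩ n)).card : ℚ)

/-- Conditional probability `Pr(A | B)`. -/
noncomputable def cpr (n : ℕ) (A B : DistΩ n → Prop) : ℚ :=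
  pr n (fun ω => A ω ∧ B ω) / pr n B

end Dist

namespace DistProof
open Dist Finset

abbrev B := ZMod 2
abbrev V := B × B × B × B × B

variable {n : ℕ}

/-- `Δ_i = f_Q(C̃_i) + f_Q(C_i)`. -/
def del (i : ℕ) (ω : DistΩ n) : B :=
  fQ (keyQ ω) (cGuess ω) i + fQ (keyQ ω) (cVer ω) i

def upd (ω : DistΩ n) (k : Fin n) (v : V) : DistΩ n :=
  (Function.update ω.1 k v.1, Function.update ω.2.1 k v.2.1,
   Function.update ω.2.2.1 k v.2.2.1, Function.update ω.2.2.2.1 k v.2.2.2.1,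
   Function.update ω.2.2.2.2 k v.2.2.2.2)

def proj (k : Fin n) (ω : DistΩ n) : V :=
  (ω.1 k, ω.2.1 k, ω.2.2.1 k, ω.2.2.2.1 k, ω.2.2.2.2 k)

/-- win-condition bit for the round with local data `v = (q,r0,r1,cv,cg)`. -/
def sBit (v : V) : B :=
  (if v.2.2.2.2 = 0 then v.2.1 else v.2.2.1) +
  (if v.2.2.2.1 = 0 then v.2.1 else v.2.2.1) +
  (v.2.2.2.2 + v.2.2.2.1) * v.1

/-- increment of `Δ` for the round. -/
def tBit (v : V) : B := (v.2.2.2.2 + v.2.2.2.1) * v.1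

lemma fQ_zero (Q c : Fin n → B) : fQ Q c 0 = 0 := by
  simp [fQ]

lemma fQ_update {i : ℕ} (Q c : Fin n → B) (k : Fin n) (x y : B) (hi : i ≤ (k : ℕ)) :
    fQ (Function.update Q k x) (Function.update c k y) i = fQ Q c i := by
  refine Finset.sum_congr rfl fun j _ => ?_
  by_cases h : (j : ℕ) < i
  · have hj : j ≠ k := by
      intro e; subst e; omega
    simp [h, Function.update_of_ne hj]
  · simp [h]

lemma fQ_succ (Q c : Fin n → B) (k : Fin n) :
    fQ Q c ((k : ℕ) + 1) = fQ Q c (k : ℕ) + c k * Q k := by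
  unfold fQ
  have key : (∑ j : Fin n, if (j : ℕ) < (k : ℕ) + 1 then c j * Q j else 0)
      = ∑ j : Fin n, ((if (j : ℕ) < (k : ℕ) then c j * Q j else 0)
          + (if j = k then c j * Q j else 0)) := by
    refine Finset.sum_congr rfl fun j _ => ?_
    by_cases h : j = k
    · subst h; simp
    · have h1 : (j : ℕ) ≠ (k : ℕ) := fun e => h (Fin.ext e)
      have h3 : ((j : ℕ) < (k : ℕ) + 1) ↔ ((j : ℕ) < (k : ℕ)) := by omega
      simp only [h3, h, if_false, add_zero]
  rw [key, Finset.sum_add_distrib, Finset.sum_ite_eq' Finset.univ k]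
  simp

lemma D_succ {i : ℕ} (hi : i < n) (ω : DistΩ n) :
    D (i + 1) ω ↔ D i ω ∧ ans ω ⟨i, hi⟩ = corr ω ⟨i, hi⟩ := by
  constructor
  · intro h
    exact ⟨fun j hj => h j (by omega), h ⟨i, hi⟩ (by simp)⟩
  · rintro ⟨h1, h2⟩ j hj
    rcases Nat.lt_succ_iff_lt_or_eq.mp hj with h | h
    · exact h1 j h
    · have : j = ⟨i, hi⟩ := Fin.ext h
      rw [this]; exact h2

lemma del_succ {i : ℕ} (hi : i < n) (ω : DistΩ n) :
    del (i + 1) ω = del i ω + (cGuess ω ⟨i, hi⟩ + cVer ω ⟨i, hi⟩) * keyQ ω ⟨i, hi⟩ := by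
  unfold del
  have h1 := fQ_succ (keyQ ω) (cGuess ω) ⟨i, hi⟩
  have h2 := fQ_succ (keyQ ω) (cVer ω) ⟨i, hi⟩
  simp only [Fin.val_mk] at h1 h2
  rw [h1, h2]; ring

lemma proj_upd (ω : DistΩ n) (k : Fin n) (v : V) : proj k (upd ω k v) = v := by
  simp [proj, upd]

lemma upd_proj (ω : DistΩ n) (k : Fin n) : upd ω k (proj k ω) = ω := by
  simp [proj, upd, Function.update_eq_self]

lemma upd_upd (ω : DistΩ n) (k : Fin n) (v w : V) : upd (upd ω k v) k w = upd ω k w := by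
  simp [upd, Function.update_idem]

lemma keyQ_upd (ω : DistΩ n) (k : Fin n) (v : V) {j : Fin n} (h : j ≠ k) :
    keyQ (upd ω k v) j = keyQ ω j := Function.update_of_ne h _ _

lemma D_upd {i : ℕ} (ω : DistΩ n) (k : Fin n) (v : V) (hi : i ≤ (k : ℕ)) :
    D i (upd ω k v) ↔ D i ω := by
  have key : ∀ j : Fin n, (j : ℕ) < i →
      (ans (upd ω k v) j = ans ω j ∧ corr (upd ω k v) j = corr ω j) := by
    intro j hj
    have hjk : j ≠ k := by
      intro e; subst e; omega
    have hreg : ∀ b, reg (upd ω k v) b j = reg ω b j := by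
      intro b
      unfold reg reg0 reg1 upd
      by_cases hb : b = 0 <;> simp [hb, Function.update_of_ne hjk]
    have hg : cGuess (upd ω k v) j = cGuess ω j := Function.update_of_ne hjk _ _
    have hv : cVer (upd ω k v) j = cVer ω j := Function.update_of_ne hjk _ _
    have hle : (j : ℕ) + 1 ≤ (k : ℕ) := by omega
    constructor
    · unfold ans
      rw [hg, hreg]
      congr 1
      exact fQ_update (keyQ ω) (cGuess ω) k v.1 v.2.2.2.2 hle
    · unfold corr
      rw [hv, hreg]
      congr 1
      exact fQ_update (keyQ ω) (cVer ω) k v.1 v.2.2.2.1 hle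
  constructor
  · intro h j hj
    have := h j hj
    rw [(key j hj).1, (key j hj).2] at this
    exact this
  · intro h j hj
    rw [(key j hj).1, (key j hj).2]
    exact h j hj

lemma del_upd {i : ℕ} (ω : DistΩ n) (k : Fin n) (v : V) (hi : i ≤ (k : ℕ)) :
    del i (upd ω k v) = del i ω := by
  unfold del
  rw [show cGuess (upd ω k v) = Function.update (cGuess ω) k v.2.2.2.2 from rfl,
      show cVer (upd ω k v) = Function.update (cVer ω) k v.2.2.2.1 from rfl,
      show keyQ (upd ω k v) = Function.update (keyQ ω) k v.1 from rfl,
      fQ_update _ _ _ _ _ hi, fQ_update _ _ _ _ _ hi]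

/-- The win condition at round `k+1` in terms of `Δ_k` and the local bits. -/
lemma win_iff (ω : DistΩ n) (k : Fin n) :
    (ans ω k = corr ω k) ↔ del (k : ℕ) ω = sBit (proj k ω) := by
  have hz : ∀ a b c d e f : B, (a + (c + e) = b + (d + f)) ↔ (c + d = a + b + (e + f)) := by
    decide
  unfold ans corr
  rw [fQ_succ, fQ_succ]
  rw [show reg ω (cGuess ω k) k + (fQ (keyQ ω) (cGuess ω) ↑k + cGuess ω k * keyQ ω k)
        = reg ω (cGuess ω k) k + (fQ (keyQ ω) (cGuess ω) ↑k + cGuess ω k * keyQ ω k) from rfl]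
  rw [hz]
  unfold del sBit proj reg reg0 reg1 cGuess cVer keyQ
  simp only []
  constructor <;> intro h <;> rw [h] <;> ring

/-- `Δ_{k+1} = Δ_k + tBit`. -/
lemma del_succ' (ω : DistΩ n) (k : Fin n) :
    del ((k : ℕ) + 1) ω = del (k : ℕ) ω + tBit (proj k ω) := by
  have := del_succ (i := (k : ℕ)) k.isLt ω
  simpa [tBit, proj, cGuess, cVer, keyQ, mul_comm] using this

open Classical in
noncomputable def cnt (n : ℕ) (E : DistΩ n → Prop) : ℕ := (Finset.univ.filter E).card

open Classical in
lemma pr_eq_cnt (E : DistΩ n → Prop) :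
    pr n E = (cnt n E : ℚ) / ((Finset.univ : Finset (DistΩ n)).card : ℚ) := by
  unfold pr cnt
  congr 1

open Classical in
/-- fibers of an invariant event over the coordinate-`k` data all have the
same cardinality. -/
lemma fiber_card_eq (k : Fin n) (E : DistΩ n → Prop)
    (hE : ∀ ω v, E (upd ω k v) ↔ E ω) (v w : V) :
    cnt n (fun ω => E ω ∧ proj k ω = v) = cnt n (fun ω => E ω ∧ proj k ω = w) := by
  unfold cnt
  refine Finset.card_bij' (fun ω _ => upd ω k w) (fun ω _ => upd ω k v) ?_ ?_ ?_ ?_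
  · intro a ha
    simp only [Finset.mem_filter, Finset.mem_univ, true_and] at ha ⊢
    exact ⟨(hE a w).mpr ha.1, proj_upd a k w⟩
  · intro a ha
    simp only [Finset.mem_filter, Finset.mem_univ, true_and] at ha ⊢
    exact ⟨(hE a v).mpr ha.1, proj_upd a k v⟩
  · intro a ha
    simp only [Finset.mem_filter, Finset.mem_univ, true_and] at ha
    rw [upd_upd, ← ha.2, upd_proj]
  · intro a ha
    simp only [Finset.mem_filter, Finset.mem_univ, true_and] at ha
    rw [upd_upd, ← ha.2, upd_proj]

open Classical in
lemma cnt_fiberwise (k : Fin n) (E : DistΩ n → Prop) :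
    cnt n E = ∑ v : V, cnt n (fun ω => E ω ∧ proj k ω = v) := by
  unfold cnt
  rw [Finset.card_eq_sum_card_fiberwise (f := proj k) (t := Finset.univ)
    (fun x _ => Finset.mem_univ _)]
  refine Finset.sum_congr rfl fun v _ => ?_
  rw [Finset.filter_filter]
  apply congrArg Finset.card
  ext ω
  simp only [Finset.mem_filter]

open Classical in
lemma cnt_invariant (k : Fin n) (E : DistΩ n → Prop)
    (hE : ∀ ω v, E (upd ω k v) ↔ E ω) (v : V) :
    cnt n E = 32 * cnt n (fun ω => E ω ∧ proj k ω = v) := by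
  rw [cnt_fiberwise k E]
  rw [Finset.sum_congr rfl (fun w _ => fiber_card_eq k E hE w v)]
  have h32 : (Finset.univ : Finset V).card = 32 := by decide
  rw [Finset.sum_const, h32, smul_eq_mul]

open Classical in
lemma cnt_congr (E E' : DistΩ n → Prop) (h : ∀ ω, E ω ↔ E' ω) : cnt n E = cnt n E' := by
  unfold cnt
  exact congrArg Finset.card (Finset.filter_congr fun x _ => h x)

open Classical in
lemma cnt_false (E : DistΩ n → Prop) (h : ∀ ω, ¬ E ω) : cnt n E = 0 := by
  unfold cnt
  rw [Finset.card_eq_zero, Finset.filter_eq_empty_iff]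
  exact fun hx _ => h _

lemma b01 : ∀ x : B, x = 0 ∨ x = 1 := by decide

lemma step_fiber {i : ℕ} (hi : i < n) (e : B) (v : V) :
    cnt n (fun ω => (D (i+1) ω ∧ del (i+1) ω = e) ∧ proj ⟨i, hi⟩ ω = v)
      = if sBit v = e + tBit v then
          cnt n (fun ω => (D i ω ∧ del i ω = sBit v) ∧ proj ⟨i, hi⟩ ω = v) else 0 := by
  set k : Fin n := ⟨i, hi⟩ with hk
  have hkv : (k : ℕ) = i := rfl
  have main : ∀ ω : DistΩ n, proj k ω = v →
      ((D (i+1) ω ∧ del (i+1) ω = e) ↔ (D i ω ∧ del i ω = sBit v ∧ del i ω + tBit v = e)) := by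
    intro ω hp
    have h1 : D (i+1) ω ↔ D i ω ∧ ans ω k = corr ω k := D_succ hi ω
    have h2 : (ans ω k = corr ω k) ↔ del i ω = sBit v := by
      rw [win_iff, hp, hkv]
    have h3 : del (i+1) ω = del i ω + tBit v := by
      have := del_succ' ω k
      rw [hp, hkv] at this
      exact this
    rw [h1, h2, h3]
    tauto
  by_cases hc : sBit v = e + tBit v
  · rw [if_pos hc]
    apply cnt_congr
    intro ω
    constructor
    · rintro ⟨hde, hp⟩
      have := (main ω hp).mp hde
      exact ⟨⟨this.1, this.2.1⟩, hp⟩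
    · rintro ⟨⟨hD, hdel⟩, hp⟩
      refine ⟨(main ω hp).mpr ⟨hD, hdel, ?_⟩, hp⟩
      rw [hdel, hc]
      have : ∀ x t : B, x + t + t = x := by decide
      exact this e (tBit v)
  · rw [if_neg hc]
    apply cnt_false
    rintro ω ⟨hde, hp⟩
    have h := (main ω hp).mp hde
    apply hc
    have : ∀ x t e : B, x + t = e → x = e + t := by decide
    rw [← h.2.1]
    exact this _ _ _ h.2.2

lemma DF_invariant {i : ℕ} (hi : i < n) (x : B) (ω : DistΩ n) (v : V) :
    (D i (upd ω ⟨i, hi⟩ v) ∧ del i (upd ω ⟨i, hi⟩ v) = x) ↔ (D i ω ∧ del i ω = x) := by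
  rw [D_upd ω ⟨i, hi⟩ v (le_refl i), del_upd ω ⟨i, hi⟩ v (le_refl i)]

lemma step_cnt {i : ℕ} (hi : i < n) (e : B) :
    32 * cnt n (fun ω => D (i+1) ω ∧ del (i+1) ω = e)
      = ∑ v : V, (if sBit v = e + tBit v then
          (if sBit v = 0 then cnt n (fun ω => D i ω ∧ del i ω = 0)
           else cnt n (fun ω => D i ω ∧ del i ω = 1)) else 0) := by
  rw [cnt_fiberwise ⟨i, hi⟩, Finset.mul_sum]
  refine Finset.sum_congr rfl fun v _ => ?_
  rw [step_fiber hi e v]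
  by_cases hc : sBit v = e + tBit v
  · rw [if_pos hc, if_pos hc]
    have inv := cnt_invariant ⟨i, hi⟩ (fun ω => D i ω ∧ del i ω = sBit v)
      (fun ω w => DF_invariant hi (sBit v) ω w) v
    rw [← inv]
    rcases b01 (sBit v) with hs | hs
    · rw [if_pos hs, hs]
    · rw [if_neg (by rw [hs]; decide), hs]
  · rw [if_neg hc, if_neg hc, mul_zero]

lemma count_eval (a b : ℕ) (e : B) :
    (∑ v : V, if sBit v = e + tBit v then (if sBit v = 0 then a else b) else 0)
      = (if e = 0 then 20 * a + 4 * b else 4 * a + 4 * b) := by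
  have hpt : ∀ v : V, (if sBit v = e + tBit v then (if sBit v = 0 then a else b) else 0)
      = a * (if sBit v = 0 ∧ tBit v = e then 1 else 0)
        + b * (if sBit v = 1 ∧ tBit v = e + 1 then 1 else 0) := by
    intro v
    rcases b01 (sBit v) with hs | hs <;> rcases b01 (tBit v) with ht | ht <;>
      rcases b01 e with he | he <;>
      simp (config := { decide := true }) [hs, ht, he]
  rw [Finset.sum_congr rfl fun v _ => hpt v, Finset.sum_add_distrib,
    ← Finset.mul_sum, ← Finset.mul_sum, ← Finset.card_filter, ← Finset.card_filter]
  rcases b01 e with he | he <;> subst he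
  · rw [if_pos rfl]
    have h1 : (Finset.univ.filter fun v : V => sBit v = 0 ∧ tBit v = 0).card = 20 := by decide
    have h2 : (Finset.univ.filter fun v : V => sBit v = 1 ∧ tBit v = (0 : B) + 1).card = 4 := by
      decide
    rw [h1, h2]; ring
  · rw [if_neg (by decide)]
    have h1 : (Finset.univ.filter fun v : V => sBit v = 0 ∧ tBit v = 1).card = 4 := by decide
    have h2 : (Finset.univ.filter fun v : V => sBit v = 1 ∧ tBit v = (1 : B) + 1).card = 4 := by
      decide
    rw [h1, h2]; ring


lemma cardN_ne (n : ℕ) : (((Finset.univ : Finset (DistΩ n)).card : ℚ)) ≠ 0 := by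
  have : 0 < (Finset.univ : Finset (DistΩ n)).card := Finset.card_pos.mpr ⟨default, Finset.mem_univ _⟩
  exact_mod_cast this.ne'

lemma step_p {i : ℕ} (hi : i < n) :
    32 * pr n (fun ω => D (i+1) ω ∧ del (i+1) ω = 0)
      = 20 * pr n (fun ω => D i ω ∧ del i ω = 0)
        + 4 * pr n (fun ω => D i ω ∧ del i ω = 1) := by
  have h := step_cnt hi 0
  rw [count_eval _ _ 0, if_pos rfl] at h
  rw [pr_eq_cnt, pr_eq_cnt, pr_eq_cnt]
  have hN := cardN_ne n
  field_simp
  exact_mod_cast h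

lemma step_q {i : ℕ} (hi : i < n) :
    32 * pr n (fun ω => D (i+1) ω ∧ del (i+1) ω = 1)
      = 4 * pr n (fun ω => D i ω ∧ del i ω = 0)
        + 4 * pr n (fun ω => D i ω ∧ del i ω = 1) := by
  have h := step_cnt hi 1
  rw [count_eval _ _ 1, if_neg (by decide)] at h
  rw [pr_eq_cnt, pr_eq_cnt, pr_eq_cnt]
  have hN := cardN_ne n
  field_simp
  rw [mul_add]
  exact_mod_cast h

open Classical in
lemma cnt_split (i : ℕ) :
    cnt n (D i) = cnt n (fun ω => D i ω ∧ del i ω = 0)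
      + cnt n (fun ω => D i ω ∧ del i ω = 1) := by
  unfold cnt
  rw [Finset.card_filter, Finset.card_filter, Finset.card_filter, ← Finset.sum_add_distrib]
  refine Finset.sum_congr rfl fun ω _ => ?_
  by_cases hD : D i ω
  · rcases b01 (del i ω) with h | h <;>
      simp (config := { decide := true }) [hD, h]
  · simp [hD]

lemma pr_split (i : ℕ) :
    pr n (D i) = pr n (fun ω => D i ω ∧ del i ω = 0)
      + pr n (fun ω => D i ω ∧ del i ω = 1) := by
  rw [pr_eq_cnt, pr_eq_cnt, pr_eq_cnt, ← add_div, cnt_split]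
  push_cast
  ring_nf

open Classical in
lemma p_zero : pr n (fun ω => D 0 ω ∧ del 0 ω = 0) = 1 := by
  rw [pr_eq_cnt]
  have : cnt n (fun ω : DistΩ n => D 0 ω ∧ del 0 ω = 0)
      = (Finset.univ : Finset (DistΩ n)).card := by
    unfold cnt
    congr 1
    ext ω
    simp only [Finset.mem_filter, Finset.mem_univ, true_and, iff_true]
    refine ⟨fun j hj => absurd hj (by omega), ?_⟩
    unfold del
    rw [fQ_zero, fQ_zero, add_zero]
  rw [this, div_self (cardN_ne n)]

lemma q_zero : pr n (fun ω => D 0 ω ∧ del 0 ω = 1) = 0 := by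
  rw [pr_eq_cnt]
  have : cnt n (fun ω : DistΩ n => D 0 ω ∧ del 0 ω = 1) = 0 := by
    apply cnt_false
    rintro ω ⟨-, h⟩
    unfold del at h
    rw [fQ_zero, fQ_zero, add_zero] at h
    exact absurd h (by decide)
  rw [this]
  norm_num

lemma pr_D_zero : pr n (D 0) = 1 := by
  rw [pr_split 0, p_zero, q_zero, add_zero]

lemma stepP' {i : ℕ} (hi : i < n) :
    pr n (fun ω => D (i+1) ω ∧ del (i+1) ω = 0)
      = (1/2) * pr n (fun ω => D i ω ∧ del i ω = 0) + (1/8) * pr n (D i) := by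
  have h := step_p hi
  have hs := pr_split (n := n) i
  linarith

lemma stepD {i : ℕ} (hi : i < n) :
    pr n (D (i+1)) = (1/4) * pr n (D i)
      + (1/2) * pr n (fun ω => D i ω ∧ del i ω = 0) := by
  have hp := step_p hi
  have hq := step_q hi
  have h1 := pr_split (n := n) (i+1)
  have h2 := pr_split (n := n) i
  linarith

lemma half_sum (m : ℕ) :
    ∑ j ∈ Finset.Icc 1 m, pr n (D (j-1)) * (1/2 : ℚ)^(m+1-j)
      = (1/2) * ∑ j ∈ Finset.Icc 1 m, pr n (D (j-1)) * (1/2)^(m-j) := by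
  rw [Finset.mul_sum]
  refine Finset.sum_congr rfl fun j hj => ?_
  have hj' : j ≤ m := (Finset.mem_Icc.mp hj).2
  have he : m + 1 - j = (m - j) + 1 := by omega
  rw [he, pow_succ]
  ring

lemma P_formula : ∀ i, i ≤ n → pr n (fun ω => D i ω ∧ del i ω = 0)
    = (1/2 : ℚ)^i + (1/8) * ∑ j ∈ Finset.Icc 1 i, pr n (D (j-1)) * (1/2)^(i-j) := by
  intro i
  induction i with
  | zero =>
    intro _
    rw [p_zero, Finset.Icc_eq_empty (by omega)]
    simp
  | succ m ih =>
    intro hm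
    have hmn : m < n := hm
    rw [stepP' hmn, ih (le_of_lt hmn),
      Finset.sum_Icc_succ_top (by omega : 1 ≤ m + 1), half_sum m]
    simp only [Nat.add_sub_cancel, Nat.sub_self, pow_zero, mul_one]
    ring

lemma main_rec {i : ℕ} (h1 : 1 ≤ i) (h2 : i ≤ n) :
    pr n (D i) = (1/4) * pr n (D (i-1)) + (1/2 : ℚ)^i
      + (1/8) * ∑ j ∈ Finset.Icc 1 (i-1), pr n (D (j-1)) * (1/2)^(i-j) := by
  obtain ⟨m, rfl⟩ : ∃ m, i = m + 1 := ⟨i - 1, by omega⟩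
  have hmn : m < n := by omega
  rw [stepD hmn, P_formula m (by omega)]
  simp only [Nat.add_sub_cancel]
  rw [half_sum m]
  ring

end DistProof

open Dist DistProof in
/-- the recursion for the distance-fraud success probabilities
`Pr(D_i) = (1/4)·Pr(D_{i−1}) + (1/2)^i + (1/8)·Σ_{j=1}^{i−1} Pr(D_{j−1})·(1/2)^{i−j}`
with `Pr(D_0) = 1`; in particular `Pr(D_1) = 3/4` and `Pr(D_2) = 1/2`. -/
theorem distance_fraud_recursion (n : ℕ) :
    (∀ i, 1 ≤ i → i ≤ n →
      pr n (D i)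
        = (1 / 4) * pr n (D (i - 1)) + (1 / 2) ^ i
          + (1 / 8) * ∑ j ∈ Finset.Icc 1 (i - 1),
              pr n (D (j - 1)) * (1 / 2) ^ (i - j)) ∧
    pr n (D 0) = 1 ∧
    (1 ≤ n → pr n (D 1) = 3 / 4) ∧
    (2 ≤ n → pr n (D 2) = 1 / 2) := by
  have hD0 : pr n (D 0) = 1 := pr_D_zero
  have hD1 : 1 ≤ n → pr n (D 1) = 3/4 := by
    intro hn
    rw [main_rec (le_refl 1) hn]
    norm_num [hD0, Finset.Icc_eq_empty (by omega : ¬ (1:ℕ) ≤ 0)]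
  refine ⟨fun i hi1 hi2 => main_rec hi1 hi2, hD0, hD1, ?_⟩
  intro hn
  rw [main_rec (by norm_num) hn]
  rw [show (2:ℕ) - 1 = 1 from rfl, Finset.Icc_self, Finset.sum_singleton]
  rw [hD1 (by omega), hD0]
  norm_num
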